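/- Let C₁ and C₂ be homothets of a fixed strictly convex closed curve (i.e., images of the boundary of a fixed compact strictly convex body K under dilations and translations with positive ratio). If C₁ ≠ C₂ as sets, then C₁ ∩ C₂ contains at most two points. -/

import Mathlib

open Metric
open Pointwise

set_option maxHeartbeats 1000000

local notation "E2" => EuclideanSpace ℝ (Fin 2)

lemma aux_two {α : Type*} [Nonempty α] (S : Set α)
    (h : ∀ p₁ ∈ S, ∀ p₂ ∈ S, ∀ p₃ ∈ S, p₁ = p₂ ∨ p₁ = p₃ ∨ p₂ = p₃) :
    ∃ a b, S ⊆ {a, b} := by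
  by_cases hex : ∃ a ∈ S, ∃ b ∈ S, a ≠ b
  · obtain ⟨a, ha, b, hb, hab⟩ := hex
    refine ⟨a, b, fun p hp => ?_⟩
    rcases h p hp a ha b hb with h1 | h1 | h1
    · exact Or.inl h1
    · exact Or.inr h1
    · exact absurd h1 hab
  · push_neg at hex
    by_cases hS : S.Nonempty
    · obtain ⟨a, ha⟩ := hS
      exact ⟨a, a, fun p hp => by simp [hex p hp a ha]⟩
    · exact ⟨Classical.arbitrary α, Classical.arbitrary α,
        fun p hp => absurd ⟨p, hp⟩ hS⟩

lemma aux_ne_coord (z : E2) (hz : z ≠ 0) : z 0 ≠ 0 ∨ z 1 ≠ 0 := by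
  by_contra h
  push_neg at h
  exact hz (by ext i; fin_cases i <;> simp [h.1, h.2])

lemma aux_inner (u x : E2) : (inner ℝ u x : ℝ) = u 0 * x 0 + u 1 * x 1 := by
  simp [PiLp.inner_apply, RCLike.inner_apply, Fin.sum_univ_two, mul_comm]

lemma aux_dep (u x y : E2) (hu : u ≠ 0) (hy : y ≠ 0)
    (hx : (inner ℝ u x : ℝ) = 0) (hyo : (inner ℝ u y : ℝ) = 0) : ∃ r : ℝ, x = r • y := by
  rw [aux_inner] at hx hyo
  have hcross : x 0 * y 1 - x 1 * y 0 = 0 := by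
    rcases aux_ne_coord u hu with h | h
    · have : u 0 * (x 0 * y 1 - x 1 * y 0) = 0 := by linear_combination y 1 * hx - x 1 * hyo
      rcases mul_eq_zero.1 this with h' | h'
      · exact absurd h' h
      · exact h'
    · have : u 1 * (x 0 * y 1 - x 1 * y 0) = 0 := by linear_combination x 0 * hyo - y 0 * hx
      rcases mul_eq_zero.1 this with h' | h'
      · exact absurd h' h
      · exact h'
  rcases aux_ne_coord y hy with h | h
  · refine ⟨x 0 / y 0, ?_⟩
    ext i
    fin_cases i <;> simp [PiLp.smul_apply, smul_eq_mul]
    · field_simp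
    · field_simp
      linear_combination -hcross
  · refine ⟨x 1 / y 1, ?_⟩
    ext i
    fin_cases i <;> simp [PiLp.smul_apply, smul_eq_mul]
    · field_simp
      linear_combination hcross
    · field_simp

lemma aux_perp (v : E2) (hv : v ≠ 0) : ∃ u : E2, u ≠ 0 ∧ (inner ℝ u v : ℝ) = 0 := by
  refine ⟨v 0 • EuclideanSpace.single 1 1 - v 1 • EuclideanSpace.single 0 1, ?_, ?_⟩
  · intro h
    have h0 := congrArg (fun z : E2 => z 0) h
    have h1 := congrArg (fun z : E2 => z 1) h
    simp [EuclideanSpace.single_apply] at h0 h1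
    exact hv (by ext i; fin_cases i <;> simp [h1, h0])
  · rw [aux_inner]
    simp [EuclideanSpace.single_apply]
    ring

lemma mem_of_frontier {L : Set E2} (hcl : IsClosed L) {p : E2} (hp : p ∈ frontier L) : p ∈ L :=
  (hcl.frontier_eq ▸ hp).1

lemma not_interior_of_frontier {L : Set E2} (hcl : IsClosed L) {p : E2} (hp : p ∈ frontier L) :
    p ∉ interior L := (hcl.frontier_eq ▸ hp).2

lemma trans_range {L : Set E2} (hcl : IsClosed L) (hsc : StrictConvex ℝ L)
    {v p y : E2} (hv : v ≠ 0) (hp : p ∈ frontier L)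
    (hpv : p - v ∈ frontier L) {r : ℝ} (hy : y ∈ L) (hyr : y = p + r • v) :
    -1 ≤ r ∧ r ≤ 0 := by
  constructor
  · by_contra h
    push_neg at h
    have hr0 : r ≠ 0 := by intro hh; rw [hh] at h; norm_num at h
    have hne : y ≠ p := by
      rw [hyr]
      intro hcon
      have h0 : r • v = 0 := by
        have := congrArg (fun z => z - p) hcon
        simpa [add_sub_cancel_left] using this
      rcases smul_eq_zero.1 h0 with h' | h'
      · exact hr0 h'
      · exact hv h'
    have key : (-1/r) • y + ((r+1)/r) • p = p - v := by
      subst hyr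
      match_scalars <;> field_simp <;> ring
    have ha : (0:ℝ) < -1/r := by
      rw [div_pos_iff]; right; constructor <;> linarith
    have hb : (0:ℝ) < (r+1)/r := by
      rw [div_pos_iff]; right; constructor <;> linarith
    have hmem : (-1/r) • y + ((r+1)/r) • p ∈ interior L :=
      hsc hy (mem_of_frontier hcl hp) hne ha hb (by field_simp; ring)
    rw [key] at hmem
    exact not_interior_of_frontier hcl hpv hmem
  · by_contra h
    push_neg at h
    have hr1 : (0:ℝ) < r + 1 := by linarith
    have hne : p - v ≠ y := by
      rw [hyr]
      intro hcon
      have h0 : (r + 1) • v = 0 := by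
        linear_combination (norm := module) -hcon
      rcases smul_eq_zero.1 h0 with h' | h'
      · linarith
      · exact hv h'
    have key : (r/(r+1)) • (p - v) + (1/(r+1)) • y = p := by
      subst hyr
      match_scalars <;> field_simp <;> ring
    have ha : (0:ℝ) < r/(r+1) := by positivity
    have hb : (0:ℝ) < 1/(r+1) := by positivity
    have hmem : (r/(r+1)) • (p - v) + (1/(r+1)) • y ∈ interior L :=
      hsc (mem_of_frontier hcl hpv) hy hne ha hb (by field_simp)
    rw [key] at hmem
    exact not_interior_of_frontier hcl hp hmem

lemma core_trans (L : Set E2) (hcl : IsClosed L) (hconv : Convex ℝ L) (hsc : StrictConvex ℝ L)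
    (v : E2) (hv : v ≠ 0)
    (p₁ p₂ p₃ : E2)
    (h₁ : p₁ ∈ frontier L ∧ p₁ - v ∈ frontier L)
    (h₂ : p₂ ∈ frontier L ∧ p₂ - v ∈ frontier L)
    (h₃ : p₃ ∈ frontier L ∧ p₃ - v ∈ frontier L) :
    p₁ = p₂ ∨ p₁ = p₃ ∨ p₂ = p₃ := by
  obtain ⟨u, hu0, huv⟩ := aux_perp v hv
  -- same inner value implies equal
  have hline : ∀ p q : E2, (p ∈ frontier L ∧ p - v ∈ frontier L) →
      (q ∈ frontier L ∧ q - v ∈ frontier L) → (inner ℝ u p : ℝ) = inner ℝ u q → p = q := by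
    intro p q hp hq hpq
    have hz : (inner ℝ u (q - p) : ℝ) = 0 := by
      rw [inner_sub_right]; rw [hpq]; ring
    obtain ⟨r, hr⟩ := aux_dep u (q - p) v hu0 hv hz huv
    have hq' : q = p + r • v := by rw [← hr]; abel
    have h1 := trans_range hcl hsc hv hp.1 hp.2 (mem_of_frontier hcl hq.1) hq'
    have hp' : p = q + (-r) • v := by rw [hq']; module
    have h2 := trans_range hcl hsc hv hq.1 hq.2 (mem_of_frontier hcl hp.1) hp'
    have : r = 0 := by
      have := h2.2
      have := h1.2
      linarith [h2.2, h1.2]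
    rw [hq', this]; simp
  -- middle point argument
  have hmid : ∀ q₁ q₂ q₃ : E2, (q₁ ∈ frontier L ∧ q₁ - v ∈ frontier L) →
      (q₂ ∈ frontier L ∧ q₂ - v ∈ frontier L) → (q₃ ∈ frontier L ∧ q₃ - v ∈ frontier L) →
      (inner ℝ u q₁ : ℝ) < inner ℝ u q₂ → (inner ℝ u q₂ : ℝ) < inner ℝ u q₃ → False := by
    intro q₁ q₂ q₃ hq₁ hq₂ hq₃ hlt1 hlt2
    set c₁ : ℝ := inner ℝ u q₁ with hc₁
    set c₂ : ℝ := inner ℝ u q₂ with hc₂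
    set c₃ : ℝ := inner ℝ u q₃ with hc₃
    have h31 : (0:ℝ) < c₃ - c₁ := by linarith
    set t : ℝ := (c₂ - c₁) / (c₃ - c₁) with ht
    have ht0 : 0 < t := div_pos (by linarith) h31
    have ht1 : t < 1 := (div_lt_one h31).2 (by linarith)
    have hne13 : q₁ ≠ q₃ := by
      intro h
      have : c₁ = c₃ := by rw [hc₁, hc₃, h]
      linarith
    set q := (1 - t) • q₁ + t • q₃ with hqdef
    have hqL : q ∈ L := hconv (mem_of_frontier hcl hq₁.1) (mem_of_frontier hcl hq₃.1)
      (by linarith) (le_of_lt ht0) (by ring)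
    have hinq : (inner ℝ u q : ℝ) = c₂ := by
      rw [hqdef, inner_add_right, real_inner_smul_right, real_inner_smul_right, ← hc₁, ← hc₃]
      rw [ht]
      field_simp
      ring
    have hz : (inner ℝ u (q - q₂) : ℝ) = 0 := by
      rw [inner_sub_right, hinq, ← hc₂]; ring
    obtain ⟨r, hr⟩ := aux_dep u (q - q₂) v hu0 hv hz huv
    have hq' : q = q₂ + r • v := by rw [← hr]; abel
    have h1 := trans_range hcl hsc hv hq₂.1 hq₂.2 hqL hq'
    have hqvL : q - v ∈ L := by
      have hrw : q - v = (1 - t) • (q₁ - v) + t • (q₃ - v) := by rw [hqdef]; module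
      rw [hrw]
      exact hconv (mem_of_frontier hcl hq₁.2) (mem_of_frontier hcl hq₃.2)
        (by linarith) (le_of_lt ht0) (by ring)
    have hq'' : q - v = q₂ + (r - 1) • v := by rw [hq']; module
    have h2 := trans_range hcl hsc hv hq₂.1 hq₂.2 hqvL hq''
    have hr0 : r = 0 := by linarith [h1.2, h2.1]
    have hqeq : q₂ = q := by rw [hq', hr0]; simp
    have hmem : q ∈ interior L := hsc (mem_of_frontier hcl hq₁.1) (mem_of_frontier hcl hq₃.1)
      hne13 (by linarith) ht0 (by ring)
    exact not_interior_of_frontier hcl hq₂.1 (hqeq ▸ hmem)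
  by_contra hcon
  push_neg at hcon
  obtain ⟨ne12, ne13, ne23⟩ := hcon
  have d12 : (inner ℝ u p₁ : ℝ) ≠ inner ℝ u p₂ := fun h => ne12 (hline _ _ h₁ h₂ h)
  have d13 : (inner ℝ u p₁ : ℝ) ≠ inner ℝ u p₃ := fun h => ne13 (hline _ _ h₁ h₃ h)
  have d23 : (inner ℝ u p₂ : ℝ) ≠ inner ℝ u p₃ := fun h => ne23 (hline _ _ h₂ h₃ h)
  rcases d12.lt_or_gt with a | a
  · rcases d23.lt_or_gt with b | b
    · exact hmid p₁ p₂ p₃ h₁ h₂ h₃ a b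
    · rcases d13.lt_or_gt with c | c
      · exact hmid p₁ p₃ p₂ h₁ h₃ h₂ c b
      · exact hmid p₃ p₁ p₂ h₃ h₁ h₂ c a
  · rcases d23.lt_or_gt with b | b
    · rcases d13.lt_or_gt with c | c
      · exact hmid p₂ p₁ p₃ h₂ h₁ h₃ a c
      · exact hmid p₂ p₃ p₁ h₂ h₃ h₁ b c
    · exact hmid p₃ p₂ p₁ h₃ h₂ h₁ b a

lemma hom_range {L : Set E2} (hcl : IsClosed L) (hsc : StrictConvex ℝ L)
    {σ : ℝ} (hσ : 1 < σ) {x y : E2} (hx0 : x ≠ 0)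
    (hx : x ∈ frontier L) (hsx : σ • x ∈ frontier L) {α : ℝ} (hy : y ∈ L) (hyα : y = α • x) :
    1 ≤ α ∧ α ≤ σ := by
  constructor
  · by_contra h
    push_neg at h
    have hσα : (0:ℝ) < σ - α := by linarith
    have hne : y ≠ σ • x := by
      rw [hyα]
      intro hcon
      have h0 : (α - σ) • x = 0 := by linear_combination (norm := module) hcon
      rcases smul_eq_zero.1 h0 with h' | h'
      · have : α = σ := by linarith
        linarith
      · exact hx0 h'
    have key : ((σ-1)/(σ-α)) • y + ((1-α)/(σ-α)) • (σ • x) = x := by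
      subst hyα
      match_scalars
      field_simp
      ring
    have hmem : ((σ-1)/(σ-α)) • y + ((1-α)/(σ-α)) • (σ • x) ∈ interior L :=
      hsc hy (mem_of_frontier hcl hsx) hne (div_pos (by linarith) hσα)
        (div_pos (by linarith) hσα) (by field_simp; ring)
    rw [key] at hmem
    exact not_interior_of_frontier hcl hx hmem
  · by_contra h
    push_neg at h
    have hα1 : (0:ℝ) < α - 1 := by linarith
    have hne : x ≠ y := by
      rw [hyα]
      intro hcon
      have h0 : (1 - α) • x = 0 := by linear_combination (norm := module) hcon
      rcases smul_eq_zero.1 h0 with h' | h'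
      · have : α = 1 := by linarith
        linarith
      · exact hx0 h'
    have key : ((α-σ)/(α-1)) • x + ((σ-1)/(α-1)) • y = σ • x := by
      subst hyα
      match_scalars
      field_simp
      ring
    have hmem : ((α-σ)/(α-1)) • x + ((σ-1)/(α-1)) • y ∈ interior L :=
      hsc (mem_of_frontier hcl hx) hy hne (div_pos (by linarith) hα1)
        (div_pos (by linarith) hα1) (by field_simp; ring)
    rw [key] at hmem
    exact not_interior_of_frontier hcl hsx hmem

lemma core_hom (L : Set E2) (hcl : IsClosed L) (hconv : Convex ℝ L) (hsc : StrictConvex ℝ L)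
    (σ : ℝ) (hσ : 1 < σ) (x₁ x₂ x₃ : E2)
    (h₁ : x₁ ∈ frontier L ∧ σ • x₁ ∈ frontier L)
    (h₂ : x₂ ∈ frontier L ∧ σ • x₂ ∈ frontier L)
    (h₃ : x₃ ∈ frontier L ∧ σ • x₃ ∈ frontier L) :
    x₁ = x₂ ∨ x₁ = x₃ ∨ x₂ = x₃ := by
  have hσ0 : (0:ℝ) < σ := by linarith
  by_cases h0 : (0:E2) ∈ L
  · have hz : ∀ x : E2, x ∈ frontier L ∧ σ • x ∈ frontier L → x = 0 := by
      intro x hx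
      by_contra hx0
      have hne : σ • x ≠ (0:E2) := by
        simp only [ne_eq, smul_eq_zero, not_or]
        exact ⟨by linarith, hx0⟩
      have key : (1/σ) • (σ • x) + (1 - 1/σ) • (0:E2) = x := by
        match_scalars
        field_simp
      have h1σ : (0:ℝ) < 1 - 1/σ := by
        rw [sub_pos]
        exact (div_lt_one hσ0).2 hσ
      have hmem : (1/σ) • (σ • x) + (1 - 1/σ) • (0:E2) ∈ interior L :=
        hsc (mem_of_frontier hcl hx.2) h0 hne (by positivity) h1σ (by ring)
      rw [key] at hmem
      exact not_interior_of_frontier hcl hx.1 hmem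
    left
    rw [hz x₁ h₁, hz x₂ h₂]
  · -- separation
    obtain ⟨f, c, hf0, hfL⟩ := geometric_hahn_banach_point_closed hconv hcl h0
    rw [map_zero] at hf0
    set u : E2 := (InnerProductSpace.toDual ℝ E2).symm f with hu_def
    have hu : ∀ z : E2, (inner ℝ u z : ℝ) = f z := fun z => InnerProductSpace.toDual_symm_apply
    have hpos : ∀ y ∈ L, (0:ℝ) < inner ℝ u y := fun y hy => by
      rw [hu]; linarith [hfL y hy]
    have hu0 : u ≠ 0 := by
      intro hcon
      have := hpos x₁ (mem_of_frontier hcl h₁.1)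
      rw [hcon] at this
      simp at this
    have hxne : ∀ x : E2, x ∈ frontier L → x ≠ 0 := by
      intro x hx hcon
      exact h0 (hcon ▸ mem_of_frontier hcl hx)
    -- collinear common points coincide
    have hcol : ∀ xa xb : E2, (xa ∈ frontier L ∧ σ • xa ∈ frontier L) →
        (xb ∈ frontier L ∧ σ • xb ∈ frontier L) → ∀ α : ℝ, xb = α • xa → xa = xb := by
      intro xa xb ha hb α hab
      have hxa0 : xa ≠ 0 := hxne xa ha.1
      have hr1 := hom_range hcl hsc hσ hxa0 ha.1 ha.2 (mem_of_frontier hcl hb.1) hab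
      have hab2 : σ • xb = (σ * α) • xa := by rw [hab, smul_smul]
      have hr2 := hom_range hcl hsc hσ hxa0 ha.1 ha.2 (mem_of_frontier hcl hb.2) hab2
      have hα : α = 1 := by nlinarith [hr1.1, hr1.2, hr2.1, hr2.2]
      rw [hab, hα, one_smul]
    -- middle-point contradiction
    have hmidh : ∀ xa xb xc : E2, (xa ∈ frontier L ∧ σ • xa ∈ frontier L) →
        (xb ∈ frontier L ∧ σ • xb ∈ frontier L) → (xc ∈ frontier L ∧ σ • xc ∈ frontier L) →
        xa ≠ xc → ∀ t : ℝ, 0 < t → t < 1 →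
        (inner ℝ u xb : ℝ)⁻¹ • xb =
          (1-t) • ((inner ℝ u xa : ℝ)⁻¹ • xa) + t • ((inner ℝ u xc : ℝ)⁻¹ • xc) → False := by
      intro xa xb xc hca hcb hcc hac t ht0 ht1 hm
      have hsa : (0:ℝ) < inner ℝ u xa := hpos xa (mem_of_frontier hcl hca.1)
      have hsb : (0:ℝ) < inner ℝ u xb := hpos xb (mem_of_frontier hcl hcb.1)
      have hsc' : (0:ℝ) < inner ℝ u xc := hpos xc (mem_of_frontier hcl hcc.1)
      set sa : ℝ := inner ℝ u xa
      set sb : ℝ := inner ℝ u xb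
      set sc : ℝ := inner ℝ u xc
      have hden : (0:ℝ) < (1-t) * sc + t * sa :=
        add_pos (mul_pos (by linarith) hsc') (mul_pos ht0 hsa)
      set hh : ℝ := sa * sc / ((1-t) * sc + t * sa) with hh_def
      have hhpos : 0 < hh := by positivity
      set a : ℝ := hh * (1-t) / sa with ha_def
      set b : ℝ := hh * t / sc with hb_def
      have hapos : 0 < a := div_pos (mul_pos hhpos (by linarith)) hsa
      have hbpos : 0 < b := div_pos (mul_pos hhpos ht0) hsc'
      have habsum : a + b = 1 := by
        rw [ha_def, hb_def, hh_def]
        field_simp [hden.ne']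
        have hd : sc - sc * t + t * sa ≠ 0 := by nlinarith [hden]
        linear_combination mul_inv_cancel₀ hd
      have hqL : a • xa + b • xc ∈ L :=
        hconv (mem_of_frontier hcl hca.1) (mem_of_frontier hcl hcc.1)
          (le_of_lt hapos) (le_of_lt hbpos) habsum
      have key1 : a • xa + b • xc = (hh/sb) • xb := by
        calc a • xa + b • xc = hh • ((1-t) • (sa⁻¹ • xa) + t • (sc⁻¹ • xc)) := by
              rw [ha_def, hb_def]
              match_scalars <;> (field_simp; try ring)
          _ = hh • (sb⁻¹ • xb) := by rw [hm]
          _ = (hh/sb) • xb := by rw [smul_smul, div_eq_mul_inv]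
      have hxb0 : xb ≠ 0 := hxne xb hcb.1
      have hr1 := hom_range hcl hsc hσ hxb0 hcb.1 hcb.2 hqL key1
      have hq2L : a • (σ • xa) + b • (σ • xc) ∈ L :=
        hconv (mem_of_frontier hcl hca.2) (mem_of_frontier hcl hcc.2)
          (le_of_lt hapos) (le_of_lt hbpos) habsum
      have key2 : a • (σ • xa) + b • (σ • xc) = (σ * (hh/sb)) • xb := by
        calc a • (σ • xa) + b • (σ • xc) = σ • (a • xa + b • xc) := by module
          _ = σ • ((hh/sb) • xb) := by rw [key1]
          _ = (σ * (hh/sb)) • xb := by rw [smul_smul]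
      have hr2 := hom_range hcl hsc hσ hxb0 hcb.1 hcb.2 hq2L key2
      have hhb : hh / sb = 1 := by nlinarith [hr1.1, hr1.2, hr2.1, hr2.2]
      have hxbeq : xb = a • xa + b • xc := by rw [key1, hhb, one_smul]
      have hmem : a • xa + b • xc ∈ interior L :=
        hsc (mem_of_frontier hcl hca.1) (mem_of_frontier hcl hcc.1) hac hapos hbpos habsum
      rw [← hxbeq] at hmem
      exact not_interior_of_frontier hcl hcb.1 hmem
    -- main argument
    by_contra hcon
    push_neg at hcon
    obtain ⟨ne12, ne13, ne23⟩ := hcon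
    have hs₁ : (0:ℝ) < inner ℝ u x₁ := hpos x₁ (mem_of_frontier hcl h₁.1)
    have hs₂ : (0:ℝ) < inner ℝ u x₂ := hpos x₂ (mem_of_frontier hcl h₂.1)
    have hs₃ : (0:ℝ) < inner ℝ u x₃ := hpos x₃ (mem_of_frontier hcl h₃.1)
    set m₁ : E2 := (inner ℝ u x₁ : ℝ)⁻¹ • x₁ with hm₁
    set m₂ : E2 := (inner ℝ u x₂ : ℝ)⁻¹ • x₂ with hm₂
    set m₃ : E2 := (inner ℝ u x₃ : ℝ)⁻¹ • x₃ with hm₃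
    have hmval : ∀ (x : E2), (0:ℝ) < inner ℝ u x → (inner ℝ u ((inner ℝ u x : ℝ)⁻¹ • x) : ℝ) = 1 := by
      intro x hx
      rw [real_inner_smul_right, inv_mul_cancel₀ (ne_of_gt hx)]
    have hmdist : ∀ xa xb : E2, (xa ∈ frontier L ∧ σ • xa ∈ frontier L) →
        (xb ∈ frontier L ∧ σ • xb ∈ frontier L) →
        (inner ℝ u xa : ℝ)⁻¹ • xa = (inner ℝ u xb : ℝ)⁻¹ • xb → xa = xb := by
      intro xa xb ha hb hab
      have hsa : (0:ℝ) < inner ℝ u xa := hpos xa (mem_of_frontier hcl ha.1)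
      have hsb : (0:ℝ) < inner ℝ u xb := hpos xb (mem_of_frontier hcl hb.1)
      refine hcol xa xb ha hb ((inner ℝ u xb : ℝ) / (inner ℝ u xa : ℝ)) ?_
      have := congrArg (fun z : E2 => (inner ℝ u xb : ℝ) • z) hab
      simp only [smul_smul] at this
      rw [div_eq_mul_inv]
      calc xb = ((inner ℝ u xb : ℝ) * (inner ℝ u xb : ℝ)⁻¹) • xb := by
            rw [mul_inv_cancel₀ (ne_of_gt hsb), one_smul]
        _ = ((inner ℝ u xb : ℝ) * (inner ℝ u xa : ℝ)⁻¹) • xa := this.symm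
    have hm12 : m₁ ≠ m₂ := fun h => ne12 (hmdist x₁ x₂ h₁ h₂ h)
    have hm13 : m₁ ≠ m₃ := fun h => ne13 (hmdist x₁ x₃ h₁ h₃ h)
    have hm23 : m₂ ≠ m₃ := fun h => ne23 (hmdist x₂ x₃ h₂ h₃ h)
    have hz1 : (inner ℝ u (m₂ - m₁) : ℝ) = 0 := by
      rw [inner_sub_right, hm₁, hm₂, hmval x₁ hs₁, hmval x₂ hs₂]
      ring
    have hz2 : (inner ℝ u (m₃ - m₁) : ℝ) = 0 := by
      rw [inner_sub_right, hm₁, hm₃, hmval x₁ hs₁, hmval x₃ hs₃]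
      ring
    obtain ⟨r, hr⟩ := aux_dep u (m₂ - m₁) (m₃ - m₁) hu0 (sub_ne_zero.2 (Ne.symm hm13)) hz1 hz2
    have hr0 : r ≠ 0 := by
      intro h
      rw [h, zero_smul, sub_eq_zero] at hr
      exact hm12 hr.symm
    have hr1' : r ≠ 1 := by
      intro h
      rw [h, one_smul] at hr
      have : m₂ = m₃ := by linear_combination (norm := module) hr
      exact hm23 this
    rcases lt_trichotomy r 0 with hrneg | hr0' | hrpos
    · have h1r : (0:ℝ) < 1 - r := by linarith
      set s : ℝ := -r / (1 - r) with hs_def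
      have hs0 : 0 < s := div_pos (by linarith) h1r
      have hs1 : s < 1 := by
        rw [hs_def, div_lt_one h1r]; linarith
      have hkey : m₁ = (1 - s) • m₂ + s • m₃ := by
        have hstep : (1 - r) • m₁ = m₂ - r • m₃ := by
          linear_combination (norm := module) -hr
        have e1 : (1:ℝ) - s = (1-r)⁻¹ := by
          rw [hs_def]
          field_simp
          ring
        have e2 : s = -((1-r)⁻¹ * r) := by
          rw [hs_def, div_eq_mul_inv]
          ring
        calc m₁ = (1-r)⁻¹ • ((1-r) • m₁) := by
              rw [smul_smul, inv_mul_cancel₀ (ne_of_gt h1r), one_smul]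
          _ = (1-r)⁻¹ • (m₂ - r • m₃) := by rw [hstep]
          _ = ((1-r)⁻¹) • m₂ + (-((1-r)⁻¹ * r)) • m₃ := by module
          _ = (1 - s) • m₂ + s • m₃ := by rw [e1, e2]
      exact hmidh x₂ x₁ x₃ h₂ h₁ h₃ ne23 s hs0 hs1 hkey
    · exact absurd hr0' hr0
    · rcases lt_trichotomy r 1 with hrlt | h1 | hrgt
      · have hkey : m₂ = (1 - r) • m₁ + r • m₃ := by
          linear_combination (norm := module) hr
        exact hmidh x₁ x₂ x₃ h₁ h₂ h₃ ne13 r hrpos hrlt hkey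
      · exact absurd h1 hr1'
      · have ht0 : (0:ℝ) < 1/r := by positivity
        have ht1 : 1/r < 1 := by rw [div_lt_one hrpos]; exact hrgt
        have hkey : m₃ = (1 - 1/r) • m₁ + (1/r) • m₂ := by
          have hstep : r • m₃ = (r - 1) • m₁ + m₂ := by
            linear_combination (norm := module) -hr
          have e1 : r⁻¹ * (r-1) = 1 - 1/r := by
            field_simp
          have e2 : r⁻¹ = (1/r : ℝ) := (one_div r).symm
          calc m₃ = r⁻¹ • (r • m₃) := by
                rw [smul_smul, inv_mul_cancel₀ (ne_of_gt hrpos), one_smul]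
            _ = r⁻¹ • ((r - 1) • m₁ + m₂) := by rw [hstep]
            _ = (r⁻¹ * (r-1)) • m₁ + r⁻¹ • m₂ := by module
            _ = (1 - 1/r) • m₁ + (1/r) • m₂ := by rw [e1, e2]
        exact hmidh x₁ x₃ x₂ h₁ h₃ h₂ ne12 (1/r) ht0 ht1 hkey

lemma frontier_affine_image (a : ℝ) (ha : a ≠ 0) (t : E2) (s : Set E2) :
    frontier ((fun x => a • x + t) '' s) = (fun x => a • x + t) '' frontier s := by
  have h : (fun x : E2 => a • x + t) =
      ((Homeomorph.smulOfNeZero a ha).trans (Homeomorph.addRight t)) := by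
    ext x
    simp [Homeomorph.smulOfNeZero, Units.smul_def]
  rw [h, Homeomorph.image_frontier]

lemma image_affine_eq (a : ℝ) (t : E2) (s : Set E2) :
    (fun x => a • x + t) '' s = (fun x => x + t) '' (a • s) := by
  rw [← Set.image_smul, Set.image_image]

lemma convex_affine_image (a : ℝ) (t : E2) {s : Set E2} (hs : Convex ℝ s) :
    Convex ℝ ((fun x => a • x + t) '' s) := by
  rw [image_affine_eq]
  have h2 : (fun x : E2 => x + t) '' (a • s) = (fun x => t + x) '' (a • s) := by
    simp [add_comm]
  rw [h2]
  exact (hs.smul a).translate t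

lemma strictconvex_affine_image (a : ℝ) (t : E2) {s : Set E2} (hs : StrictConvex ℝ s) :
    StrictConvex ℝ ((fun x => a • x + t) '' s) := by
  rw [image_affine_eq]
  exact (hs.smul a).add_right t

lemma compact_affine_image (a : ℝ) (t : E2) {s : Set E2} (hs : IsCompact s) :
    IsCompact ((fun x => a • x + t) '' s) :=
  hs.image (((continuous_id.const_smul a).add continuous_const))

theorem homothets_of_strictly_convex_boundary_inter_at_most_two
    (K : Set (EuclideanSpace ℝ (Fin 2)))
    (hK : IsCompact K) (hKconv : Convex ℝ K)
    (hKstrict : StrictConvex ℝ K) (hKint : (interior K).Nonempty)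
    (lam₁ lam₂ : ℝ) (hlam₁ : 0 < lam₁) (hlam₂ : 0 < lam₂)
    (t₁ t₂ : EuclideanSpace ℝ (Fin 2))
    (C₁ C₂ : Set (EuclideanSpace ℝ (Fin 2)))
    (hC₁ : C₁ = (fun x => lam₁ • x + t₁) '' frontier K)
    (hC₂ : C₂ = (fun x => lam₂ • x + t₂) '' frontier K)
    (hne : C₁ ≠ C₂) :
    ∃ a b : EuclideanSpace ℝ (Fin 2), C₁ ∩ C₂ ⊆ {a, b} := by
  set K₁ : Set E2 := (fun x => lam₁ • x + t₁) '' K with hK₁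
  set K₂ : Set E2 := (fun x => lam₂ • x + t₂) '' K with hK₂
  have hK₁cl : IsClosed K₁ := (compact_affine_image lam₁ t₁ hK).isClosed
  have hK₁conv : Convex ℝ K₁ := convex_affine_image lam₁ t₁ hKconv
  have hK₁sc : StrictConvex ℝ K₁ := strictconvex_affine_image lam₁ t₁ hKstrict
  have hC₁' : C₁ = frontier K₁ := by
    rw [hC₁, hK₁, frontier_affine_image lam₁ (ne_of_gt hlam₁) t₁ K]
  have hC₂' : C₂ = frontier K₂ := by
    rw [hC₂, hK₂, frontier_affine_image lam₂ (ne_of_gt hlam₂) t₂ K]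
  set μ : ℝ := lam₂ / lam₁ with hμ
  have hμpos : 0 < μ := div_pos hlam₂ hlam₁
  set w : E2 := t₂ - μ • t₁ with hw
  have hml : μ * lam₁ = lam₂ := div_mul_cancel₀ lam₂ (ne_of_gt hlam₁)
  have hK₂eq : K₂ = (fun x => μ • x + w) '' K₁ := by
    rw [hK₂, hK₁, Set.image_image]
    apply Set.image_congr'
    intro x
    rw [smul_add, smul_smul, hml, hw]
    abel
  by_cases hμ1 : μ = 1
  · by_cases hwz : w = 0
    · exfalso
      apply hne
      have hl : lam₂ = lam₁ := by
        have h' : lam₂ / lam₁ = 1 := hμ1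
        rwa [div_eq_one_iff_eq (ne_of_gt hlam₁)] at h'
      have ht : t₂ = t₁ := by
        have h0 : t₂ - μ • t₁ = 0 := hwz
        rw [hμ1, one_smul, sub_eq_zero] at h0
        exact h0
      rw [hC₁, hC₂, hl, ht]
    · -- translation case
      have hsub : ∀ p ∈ C₁ ∩ C₂, p ∈ frontier K₁ ∧ p - w ∈ frontier K₁ := by
        intro p hp
        refine ⟨hC₁' ▸ hp.1, ?_⟩
        have hp2 : p ∈ frontier K₂ := hC₂' ▸ hp.2
        rw [hK₂eq, frontier_affine_image μ (ne_of_gt hμpos) w K₁] at hp2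
        obtain ⟨x, hx, hxe⟩ := hp2
        simp only at hxe
        have hxp : x = p - w := by
          rw [← hxe, hμ1, one_smul]
          abel
        rwa [← hxp]
      obtain ⟨a, b, hab⟩ := aux_two {p : E2 | p ∈ frontier K₁ ∧ p - w ∈ frontier K₁}
        (fun p₁ h1 p₂ h2 p₃ h3 => core_trans K₁ hK₁cl hK₁conv hK₁sc w hwz p₁ p₂ p₃ h1 h2 h3)
      exact ⟨a, b, fun p hp => hab (hsub p hp)⟩
  · -- homothety case
    set c : E2 := (1 - μ)⁻¹ • w with hc
    have h1μ : (1:ℝ) - μ ≠ 0 := fun h => hμ1 (by linarith [sub_eq_zero.1 h])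
    have hwc : c - μ • c = w := by
      calc c - μ • c = (1 - μ) • c := by rw [sub_smul, one_smul]
        _ = (1 - μ) • ((1 - μ)⁻¹ • w) := by rw [hc]
        _ = w := by rw [smul_smul, mul_inv_cancel₀ h1μ, one_smul]
    have hK₁cp : IsCompact K₁ := compact_affine_image lam₁ t₁ hK
    set L : Set E2 := (fun x => (1:ℝ) • x + (-c)) '' K₁ with hL
    have hLcl : IsClosed L := (compact_affine_image 1 (-c) hK₁cp).isClosed
    have hLconv : Convex ℝ L := convex_affine_image 1 (-c) hK₁conv
    have hLsc : StrictConvex ℝ L := strictconvex_affine_image 1 (-c) hK₁sc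
    have hfr : frontier L = (fun x => (1:ℝ) • x + (-c)) '' frontier K₁ :=
      frontier_affine_image 1 one_ne_zero (-c) K₁
    have hmem1 : ∀ q, q ∈ frontier K₁ → q - c ∈ frontier L := by
      intro q hq
      rw [hfr]
      exact ⟨q, hq, by show (1:ℝ) • q + -c = q - c; module⟩
    have hmain : ∀ p ∈ C₁ ∩ C₂, p - c ∈ frontier L ∧ μ⁻¹ • (p - c) ∈ frontier L := by
      intro p hp
      refine ⟨hmem1 p (hC₁' ▸ hp.1), ?_⟩
      have hp2 : p ∈ frontier K₂ := hC₂' ▸ hp.2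
      rw [hK₂eq, frontier_affine_image μ (ne_of_gt hμpos) w K₁] at hp2
      obtain ⟨q, hq, hqe⟩ := hp2
      simp only at hqe
      have hstep : μ⁻¹ • (p - c) = q - c := by
        rw [← hqe]
        have hwc2 : μ • q + w - c = μ • (q - c) := by
          rw [← hwc]
          module
        rw [hwc2, smul_smul, inv_mul_cancel₀ (ne_of_gt hμpos), one_smul]
      rw [hstep]
      exact hmem1 q hq
    rcases lt_or_gt_of_ne hμ1 with hlt | hgt
    · have hσ : 1 < μ⁻¹ := by
        have h1 : μ * μ⁻¹ = 1 := mul_inv_cancel₀ (ne_of_gt hμpos)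
        nlinarith
      obtain ⟨a, b, hab⟩ := aux_two {x : E2 | x ∈ frontier L ∧ μ⁻¹ • x ∈ frontier L}
        (fun p₁ h1 p₂ h2 p₃ h3 => core_hom L hLcl hLconv hLsc μ⁻¹ hσ p₁ p₂ p₃ h1 h2 h3)
      refine ⟨a + c, b + c, fun p hp => ?_⟩
      rcases hab (hmain p hp) with h | h
      · exact Or.inl (by rw [← h]; abel)
      · exact Or.inr (by rw [Set.mem_singleton_iff, ← h]; abel)
    · obtain ⟨a, b, hab⟩ := aux_two {x : E2 | x ∈ frontier L ∧ μ • x ∈ frontier L}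
        (fun p₁ h1 p₂ h2 p₃ h3 => core_hom L hLcl hLconv hLsc μ hgt p₁ p₂ p₃ h1 h2 h3)
      refine ⟨μ • a + c, μ • b + c, fun p hp => ?_⟩
      have hm := hmain p hp
      have hy : μ⁻¹ • (p - c) ∈ frontier L ∧ μ • (μ⁻¹ • (p - c)) ∈ frontier L := by
        refine ⟨hm.2, ?_⟩
        rw [smul_smul, mul_inv_cancel₀ (ne_of_gt hμpos), one_smul]
        exact hm.1
      rcases hab hy with h | h
      · have h2 : p - c = μ • a := by
          rw [← h, smul_smul, mul_inv_cancel₀ (ne_of_gt hμpos), one_smul]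
        exact Or.inl (by rw [← h2]; abel)
      · have h2 : p - c = μ • b := by
          rw [Set.mem_singleton_iff] at h
          rw [← h, smul_smul, mul_inv_cancel₀ (ne_of_gt hμpos), one_smul]
        exact Or.inr (by rw [Set.mem_singleton_iff, ← h2]; abel)
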